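/- Let c = (c_1,…,c_n) be an increasing positive integer sequence with c_1 ≥ 3 and let r ∈ [n]. Define w(A) = |{L ∈ L_c^{(r)} : L ∩ ([n] × {1}) = A × {1}}| for A ⊆ [n] with |A| ≤ r. Then w(δ_{i,j}(A)) ≥ w(A) for all such A and all i < j in [n], where δ_{i,j}(A) = (A \ {j}) ∪ {i} if j ∈ A, i ∉ A, else A. -/
import Mathlib


def delta (i j : ℕ) (S : Finset ℕ) : Finset ℕ :=
  if j ∈ S ∧ i ∉ S then insert i (S.erase j) else S

def IsLabeledR (n : ℕ) (c : ℕ → ℕ) (r : ℕ) (S : Finset (ℕ × ℕ)) : Prop :=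
  S.card = r ∧ (∀ p ∈ S, 1 ≤ p.1 ∧ p.1 ≤ n ∧ 1 ≤ p.2 ∧ p.2 ≤ c p.1) ∧
    ∀ p ∈ S, ∀ q ∈ S, p.1 = q.1 → p = q

/-- `labW n c r A = |{L ∈ L_c^{(r)} : L ∩ ([n] × {1}) = A × {1}}|`. -/
noncomputable def labW (n : ℕ) (c : ℕ → ℕ) (r : ℕ) (A : Finset ℕ) : ℕ :=
  Set.ncard {L : Finset (ℕ × ℕ) | IsLabeledR n c r L ∧
    L ∩ (Finset.Icc 1 n ×ˢ ({1} : Finset ℕ)) = A ×ˢ ({1} : Finset ℕ)}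

theorem stmt15 (n r : ℕ) (c : ℕ → ℕ)
    (hcmono : ∀ i j, 1 ≤ i → i ≤ j → j ≤ n → c i ≤ c j) (hc1 : 3 ≤ c 1)
    (hr : 1 ≤ r) (hrn : r ≤ n)
    (A : Finset ℕ) (hA : A ⊆ Finset.Icc 1 n) (hcard : A.card ≤ r)
    (i j : ℕ) (hi : i ∈ Finset.Icc 1 n) (hj : j ∈ Finset.Icc 1 n) (hij : i < j) :
    labW n c r A ≤ labW n c r (delta i j A) := by
  by_cases hcase : j ∈ A ∧ i ∉ A
  swap
  · simp [delta, hcase]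
  obtain ⟨hjA, hiA⟩ := hcase
  have hdelta : delta i j A = insert i (A.erase j) := by simp [delta, hjA, hiA]
  rw [hdelta]
  simp only [Finset.mem_Icc] at hi hj
  have hne : i ≠ j := hij.ne
  have hcij : c i ≤ c j := hcmono i j hi.1 hij.le hj.2
  have hci : 1 ≤ c i := le_trans (by omega) (le_trans hc1 (hcmono 1 i le_rfl hi.1 hi.2))
  -- the swap on indices
  set swi : ℕ → ℕ := fun x => if x = i then j else if x = j then i else x with hswi
  set sw : ℕ × ℕ → ℕ × ℕ := fun p => (swi p.1, p.2) with hsw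
  have hswi_inv : ∀ x, swi (swi x) = x := by
    intro x
    by_cases h1 : x = i <;> by_cases h2 : x = j <;> simp [hswi, h1, h2, hne, hne.symm]
  have hsw_inv : ∀ p, sw (sw p) = p := by
    intro p; simp [hsw, hswi_inv]
  have hsw_inj : Function.Injective sw :=
    Function.Involutive.injective hsw_inv
  have mem_image_sw : ∀ (s : Finset (ℕ × ℕ)) (p : ℕ × ℕ),
      p ∈ s.image sw ↔ sw p ∈ s := by
    intro s p
    constructor
    · rintro h
      obtain ⟨q, hq, rfl⟩ := Finset.mem_image.mp h
      rwa [hsw_inv]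
    · intro h
      exact Finset.mem_image.mpr ⟨sw p, h, hsw_inv p⟩
  set base : Finset (ℕ × ℕ) := Finset.Icc 1 n ×ˢ ({1} : Finset ℕ) with hbase
  set A' : Finset ℕ := insert i (A.erase j) with hA'
  have hswiA : ∀ x, swi x ∈ A ↔ x ∈ A' := by
    intro x
    by_cases h1 : x = i
    · simp [hswi, hA', h1, hjA]
    · by_cases h2 : x = j
      · simp [hswi, hA', h1, h2, hiA, hne.symm]
      · simp [hswi, hA', h1, h2, hne, hne.symm]
  have hswiIcc : ∀ x, swi x ∈ Finset.Icc 1 n ↔ x ∈ Finset.Icc 1 n := by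
    intro x
    by_cases h1 : x = i
    · simp [hswi, h1, Finset.mem_Icc, hi, hj]
    · by_cases h2 : x = j
      · simp [hswi, h1, h2, hne.symm, Finset.mem_Icc, hi, hj]
      · simp [hswi, h1, h2]
  -- finiteness of the target set
  set M : ℕ := (Finset.Icc 1 n).sup c with hM
  have hfin0 : {L : Finset (ℕ × ℕ) | L ⊆ Finset.Icc 1 n ×ˢ Finset.Icc 1 M}.Finite :=
    Set.Finite.ofFinset ((Finset.Icc 1 n ×ˢ Finset.Icc 1 M).powerset)
      (fun L => by simp [Finset.mem_powerset, Set.mem_setOf_eq])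
  have hfinT : {L : Finset (ℕ × ℕ) | IsLabeledR n c r L ∧
      L ∩ base = A' ×ˢ ({1} : Finset ℕ)}.Finite := by
    apply Set.Finite.subset hfin0
    rintro L ⟨⟨hcard', hbnd, huniq⟩, hint⟩
    intro p hp
    obtain ⟨h1, h2, h3, h4⟩ := hbnd p hp
    simp only [Finset.mem_product, Finset.mem_Icc]
    refine ⟨⟨h1, h2⟩, h3, le_trans h4 ?_⟩
    exact Finset.le_sup (Finset.mem_Icc.mpr ⟨h1, h2⟩)
  apply Set.ncard_le_ncard_of_injOn (fun L => L.image sw) _ _ hfinT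
  · -- maps to
    rintro L ⟨⟨hcardL, hbnd, huniq⟩, hint⟩
    have hj1 : (j, 1) ∈ L := by
      have : (j, 1) ∈ A ×ˢ ({1} : Finset ℕ) := by simp [hjA]
      rw [← hint] at this
      exact (Finset.mem_inter.mp this).1
    constructor
    · refine ⟨?_, ?_, ?_⟩
      · rw [Finset.card_image_of_injective _ hsw_inj, hcardL]
      · intro p hp
        obtain ⟨q, hq, rfl⟩ := Finset.mem_image.mp hp
        obtain ⟨h1, h2, h3, h4⟩ := hbnd q hq
        by_cases e1 : q.1 = i
        · have : sw q = (j, q.2) := by simp [hsw, hswi, e1]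
          rw [this]
          exact ⟨hj.1, hj.2, h3, le_trans h4 (by rw [e1] at *; exact hcij)⟩
        · by_cases e2 : q.1 = j
          · have hq1 : q = (j, 1) := huniq q hq (j, 1) hj1 e2
            have : sw q = (i, 1) := by rw [hq1]; simp [hsw, hswi, hne.symm]
            rw [this]
            exact ⟨hi.1, hi.2, le_rfl, hci⟩
          · have : sw q = q := by simp [hsw, hswi, e1, e2]
            rw [this]
            exact ⟨h1, h2, h3, h4⟩
      · intro p hp q hq hpq
        obtain ⟨p', hp', rfl⟩ := Finset.mem_image.mp hp
        obtain ⟨q', hq', rfl⟩ := Finset.mem_image.mp hq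
        have hfst : swi p'.1 = swi q'.1 := hpq
        have : p'.1 = q'.1 := by
          have := congrArg swi hfst
          rwa [hswi_inv, hswi_inv] at this
        rw [huniq p' hp' q' hq' this]
    · -- intersection condition
      ext p
      constructor
      · intro hp
        obtain ⟨hpim, hpb⟩ := Finset.mem_inter.mp hp
        have hpL : sw p ∈ L := (mem_image_sw L p).mp hpim
        obtain ⟨hp1, hp2⟩ := Finset.mem_product.mp hpb
        have hmem : sw p ∈ L ∩ base :=
          Finset.mem_inter.mpr ⟨hpL,
            Finset.mem_product.mpr ⟨(hswiIcc p.1).mpr hp1, hp2⟩⟩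
        rw [hint] at hmem
        obtain ⟨hq1, hq2⟩ := Finset.mem_product.mp hmem
        exact Finset.mem_product.mpr ⟨(hswiA p.1).mp hq1, hp2⟩
      · intro hp
        obtain ⟨hp1, hp2⟩ := Finset.mem_product.mp hp
        have hsp : sw p ∈ A ×ˢ ({1} : Finset ℕ) :=
          Finset.mem_product.mpr ⟨(hswiA p.1).mpr hp1, hp2⟩
        rw [← hint] at hsp
        obtain ⟨hL, _⟩ := Finset.mem_inter.mp hsp
        refine Finset.mem_inter.mpr ⟨(mem_image_sw L p).mpr hL,
          Finset.mem_product.mpr ⟨?_, hp2⟩⟩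
        rcases Finset.mem_insert.mp hp1 with h | h
        · exact h ▸ Finset.mem_Icc.mpr hi
        · exact hA (Finset.mem_of_mem_erase h)
  · -- injectivity
    intro L1 _ L2 _ h
    exact Finset.image_injective hsw_inj h
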